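/- arXiv:0711.1265 — 2 statements merged into one kernel-verified Lean document; each statement's English description precedes it below -/
import Mathlib

section
/- Let f : ℝ → ℝ be 2π-periodic with |f(θ)| ≤ M for all θ, where M ≥ 1, and let Ψ : ℝ → ℝ be 2π-periodic and of class C⁴. Then there exists C₀ > 0, depending only on M and ‖Ψ‖_{C⁴}, such that for all ε ∈ (0, 1/(2M)]: sup_{θ ∈ [0,2π]} | Σ_{n=1}^∞ [ 1 − ((1−εM)/(1+εf(θ)))^n − ε n (M + f(θ)) ] ( â_n(Ψ) cos nθ + b̂_n(Ψ) sin nθ ) | ≤ C₀ ε². -/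
open Real MeasureTheory Set Filter

/-- Fourier cosine coefficient `â_n(g) = (1/π)∫₀^{2π} g(θ) cos(nθ) dθ`. -/
noncomputable def aHat (g : ℝ → ℝ) (n : ℕ) : ℝ :=
  (1 / π) * ∫ θ in (0:ℝ)..(2 * π), g θ * Real.cos (n * θ)

/-- Fourier sine coefficient `b̂_n(g) = (1/π)∫₀^{2π} g(θ) sin(nθ) dθ`. -/
noncomputable def bHat (g : ℝ → ℝ) (n : ℕ) : ℝ :=
  (1 / π) * ∫ θ in (0:ℝ)..(2 * π), g θ * Real.sin (n * θ)

/-- Dirichlet-to-Neumann operator of the unit disk for exterior harmonic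
functions: `N₀(Ψ)(θ) = −Σ_{n≥1} n (â_n(Ψ) cos nθ + b̂_n(Ψ) sin nθ)`. -/
noncomputable def N0 (Ψ : ℝ → ℝ) (θ : ℝ) : ℝ :=
  -∑' n : ℕ, ((n : ℝ) + 1) *
    (aHat Ψ (n + 1) * Real.cos (((n : ℝ) + 1) * θ) +
     bHat Ψ (n + 1) * Real.sin (((n : ℝ) + 1) * θ))

/-- `D₀(Ψ)(θ) = −Σ_{n≥1} (n+1)(â_n(Ψ) cos nθ + b̂_n(Ψ) sin nθ)`. -/
noncomputable def D0 (Ψ : ℝ → ℝ) (θ : ℝ) : ℝ :=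
  -∑' n : ℕ, ((n : ℝ) + 2) *
    (aHat Ψ (n + 1) * Real.cos (((n : ℝ) + 1) * θ) +
     bHat Ψ (n + 1) * Real.sin (((n : ℝ) + 1) * θ))

/-- `u` is harmonic on `s ⊆ ℝ²`: twice continuously differentiable with
vanishing Laplacian `∂²u/∂x² + ∂²u/∂y² = 0` on `s`. -/
def HarmonicOnSet (u : ℝ × ℝ → ℝ) (s : Set (ℝ × ℝ)) : Prop :=
  ContDiffOn ℝ 2 u s ∧ ∀ x ∈ s,
    iteratedFDeriv ℝ 2 u x ![((1:ℝ), (0:ℝ)), ((1:ℝ), (0:ℝ))] +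
      iteratedFDeriv ℝ 2 u x ![((0:ℝ), (1:ℝ)), ((0:ℝ), (1:ℝ))] = 0

/-- The closed perturbed disk `D̄_ε` with boundary
`{(1+εf(θ))(cos θ, sin θ)}`. -/
def Dbar (ε : ℝ) (f : ℝ → ℝ) : Set (ℝ × ℝ) :=
  {x | ∃ ρ θ : ℝ, 0 ≤ ρ ∧ ρ ≤ 1 + ε * f θ ∧
    x = (ρ * Real.cos θ, ρ * Real.sin θ)}

/-- Sup norm of `|g|` over `[0, 2π]`. -/
noncomputable def supIcc (g : ℝ → ℝ) : ℝ :=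
  ⨆ θ ∈ Set.Icc (0:ℝ) (2 * π), |g θ|

/-- `‖Ψ‖_{C⁴}`: max of the sup norms of `Ψ` and its first four derivatives. -/
noncomputable def C4norm (Ψ : ℝ → ℝ) : ℝ :=
  ⨆ i ∈ Finset.range 5, supIcc (iteratedDeriv i Ψ)

/-- `M = max(‖f‖_∞, ‖f'‖_∞, 1)`. -/
noncomputable def Mconst (f : ℝ → ℝ) : ℝ :=
  max (max (supIcc f) (supIcc (deriv f))) 1

/-- `u₀^{εM}(r,θ) = Σ_{n≥0} ((1−εM)/r)^n (â_n(Ψ) cos nθ + b̂_n(Ψ) sin nθ)`. -/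
noncomputable def u0eM (Ψ : ℝ → ℝ) (ε M r θ : ℝ) : ℝ :=
  ∑' n : ℕ, ((1 - ε * M) / r) ^ n *
    (aHat Ψ n * Real.cos (n * θ) + bHat Ψ n * Real.sin (n * θ))

/-- `u₁^{εM}(r,θ) = −Σ_{n≥0} ((1−εM)/r)^n (â_n((f+M)N₀Ψ) cos nθ + b̂_n((f+M)N₀Ψ) sin nθ)`. -/
noncomputable def u1eM (f Ψ : ℝ → ℝ) (ε M r θ : ℝ) : ℝ :=
  -∑' n : ℕ, ((1 - ε * M) / r) ^ n *
    (aHat (fun t => (f t + M) * N0 Ψ t) n * Real.cos (n * θ) +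
     bHat (fun t => (f t + M) * N0 Ψ t) n * Real.sin (n * θ))

/-- `u₀(r,θ) = Σ_{n≥0} r^{−n} (â_n(Ψ) cos nθ + b̂_n(Ψ) sin nθ)`. -/
noncomputable def u0ser (Ψ : ℝ → ℝ) (r θ : ℝ) : ℝ :=
  ∑' n : ℕ, r ^ (-(n : ℤ)) *
    (aHat Ψ n * Real.cos (n * θ) + bHat Ψ n * Real.sin (n * θ))

lemma geom_est (q : ℝ) (h0 : 0 ≤ q) (h1 : q ≤ 1) (m : ℕ) :
    |1 - q ^ m - m * (1 - q)| ≤ m ^ 2 * (1 - q) ^ 2 := by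
  induction m with
  | zero => simp
  | succ m ih =>
    have key : 1 - q ^ (m + 1) - (m + 1 : ℕ) * (1 - q)
        = q * (1 - q ^ m - m * (1 - q)) - m * (1 - q) ^ 2 := by
      push_cast; ring
    rw [key]
    have h2 : |q * (1 - q ^ m - m * (1 - q))| ≤ m ^ 2 * (1 - q) ^ 2 := by
      rw [abs_mul, abs_of_nonneg h0]
      calc q * |1 - q ^ m - m * (1 - q)| ≤ 1 * (m ^ 2 * (1 - q) ^ 2) :=
            mul_le_mul h1 ih (abs_nonneg _) one_pos.le
        _ = m ^ 2 * (1 - q) ^ 2 := one_mul _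
    have h3 : |(m : ℝ) * (1 - q) ^ 2| = m * (1 - q) ^ 2 := by
      rw [abs_mul, abs_of_nonneg (by positivity : (0:ℝ) ≤ (m:ℝ)), abs_of_nonneg (by positivity)]
    calc |q * (1 - q ^ m - m * (1 - q)) - m * (1 - q) ^ 2|
        ≤ |q * (1 - q ^ m - m * (1 - q))| + |(m:ℝ) * (1 - q) ^ 2| := abs_sub _ _
      _ ≤ m ^ 2 * (1 - q) ^ 2 + m * (1 - q) ^ 2 := by rw [h3]; linarith [h2]
      _ ≤ ((m:ℝ) + 1) ^ 2 * (1 - q) ^ 2 := by nlinarith [sq_nonneg (1 - q), (by positivity : (0:ℝ) ≤ (m:ℝ))]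
      _ = ((m + 1 : ℕ) : ℝ) ^ 2 * (1 - q) ^ 2 := by push_cast; ring

lemma coef_est (M ε F : ℝ) (hM : 1 ≤ M) (hF : |F| ≤ M) (hε : 0 < ε)
    (hε2 : ε * M ≤ 1 / 2) (m : ℕ) (hm : 1 ≤ m) :
    |1 - ((1 - ε * M) / (1 + ε * F)) ^ m - ε * m * (M + F)|
      ≤ 20 * M ^ 2 * m ^ 2 * ε ^ 2 := by
  have hFl : -M ≤ F := neg_le_of_abs_le hF
  have hFu : F ≤ M := le_of_abs_le hF
  have hεF : -(ε * M) ≤ ε * F := by nlinarith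
  have hden : (1:ℝ)/2 ≤ 1 + ε * F := by nlinarith
  have hdenpos : (0:ℝ) < 1 + ε * F := by linarith
  set q := (1 - ε * M) / (1 + ε * F) with hq
  have hq0 : 0 ≤ q := by
    apply div_nonneg <;> linarith
  have hq1 : q ≤ 1 := by
    rw [hq, div_le_one hdenpos]; nlinarith
  have h1q : 1 - q = ε * (M + F) / (1 + ε * F) := by
    rw [hq]; field_simp; ring
  have h1qb : 1 - q ≤ 4 * M * ε := by
    rw [h1q, div_le_iff₀ hdenpos]
    nlinarith [mul_le_mul_of_nonneg_left hden (by positivity : (0:ℝ) ≤ 4*M*ε)]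
  have h1q0 : 0 ≤ 1 - q := by linarith
  have hsplit : 1 - q ^ m - ε * m * (M + F)
      = (1 - q ^ m - m * (1 - q)) + (-(ε ^ 2 * m * (M + F) * F / (1 + ε * F))) := by
    rw [h1q]; field_simp; ring
  rw [hsplit]
  have h2 : |-(ε ^ 2 * m * (M + F) * F / (1 + ε * F))| ≤ 4 * M ^ 2 * m * ε ^ 2 := by
    rw [abs_neg, abs_div, abs_of_pos hdenpos, div_le_iff₀ hdenpos]
    have hMF : |M + F| ≤ 2 * M := by rw [abs_le]; constructor <;> linarith
    have key : |ε ^ 2 * (m:ℝ) * (M + F) * F| ≤ ε ^ 2 * m * (2 * M) * M := by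
      rw [abs_mul, abs_mul, abs_mul, abs_pow, abs_of_pos hε, Nat.abs_cast]
      gcongr
    nlinarith [mul_le_mul_of_nonneg_left hden (by positivity : (0:ℝ) ≤ 4 * M ^ 2 * (m:ℝ) * ε ^ 2)]
  have h1 : |1 - q ^ m - m * (1 - q)| ≤ 16 * M ^ 2 * m ^ 2 * ε ^ 2 := by
    calc |1 - q ^ m - m * (1 - q)| ≤ m ^ 2 * (1 - q) ^ 2 := geom_est q hq0 hq1 m
      _ ≤ m ^ 2 * (4 * M * ε) ^ 2 := by
          apply mul_le_mul_of_nonneg_left _ (by positivity)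
          exact pow_le_pow_left₀ h1q0 h1qb 2
      _ = 16 * M ^ 2 * m ^ 2 * ε ^ 2 := by ring
  have hmm : (m:ℝ) ≤ (m:ℝ)^2 := by nlinarith [(by exact_mod_cast hm : (1:ℝ) ≤ (m:ℝ))]
  have hmm2 := mul_le_mul_of_nonneg_left hmm (by positivity : (0:ℝ) ≤ 4 * M ^ 2 * ε ^ 2)
  calc |(1 - q ^ m - m * (1 - q)) + (-(ε ^ 2 * m * (M + F) * F / (1 + ε * F)))|
      ≤ |1 - q ^ m - m * (1 - q)| + |-(ε ^ 2 * m * (M + F) * F / (1 + ε * F))| := abs_add_le _ _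
    _ ≤ 16 * M ^ 2 * m ^ 2 * ε ^ 2 + 4 * M ^ 2 * m * ε ^ 2 := by linarith
    _ ≤ 20 * M ^ 2 * m ^ 2 * ε ^ 2 := by nlinarith


lemma sin_two_pi_nat (m : ℕ) : Real.sin (m * (2 * π)) = 0 := by
  have : (m : ℝ) * (2 * π) = (2 * m : ℕ) * π := by push_cast; ring
  rw [this, Real.sin_nat_mul_pi]

lemma hd_sinm (m : ℕ) (hm0 : (m:ℝ) ≠ 0) (x : ℝ) :
    HasDerivAt (fun y => Real.sin (m * y) / m) (Real.cos (m * x)) x := by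
  have h1 : HasDerivAt (fun y : ℝ => (m:ℝ) * y) ((m:ℝ) * 1) x := (hasDerivAt_id x).const_mul _
  have h2 := h1.sin
  have := h2.div_const (m:ℝ)
  exact this.congr_deriv (by field_simp)

lemma hd_cosm (m : ℕ) (hm0 : (m:ℝ) ≠ 0) (x : ℝ) :
    HasDerivAt (fun y => -(Real.cos (m * y) / m)) (Real.sin (m * x)) x := by
  have h1 : HasDerivAt (fun y : ℝ => (m:ℝ) * y) ((m:ℝ) * 1) x := (hasDerivAt_id x).const_mul _
  have h2 := h1.cos
  have := (h2.div_const (m:ℝ)).neg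
  exact this.congr_deriv (by field_simp)

lemma ibp_cos (g : ℝ → ℝ) (hg : ContDiff ℝ 1 g) (m : ℕ) (hm : 1 ≤ m) :
    aHat g m = -(1 / m) * bHat (deriv g) m := by
  have hm0 : (m : ℝ) ≠ 0 := Nat.cast_ne_zero.2 (by omega)
  have hu : ∀ x ∈ Set.uIcc (0:ℝ) (2 * π), HasDerivAt g (deriv g x) x := fun x _ =>
    (hg.differentiable one_ne_zero x).hasDerivAt
  have hv : ∀ x ∈ Set.uIcc (0:ℝ) (2 * π),
      HasDerivAt (fun y => Real.sin (m * y) / m) (Real.cos (m * x)) x :=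
    fun x _ => hd_sinm m hm0 x
  have hu' : IntervalIntegrable (deriv g) volume 0 (2 * π) :=
    (hg.continuous_deriv le_rfl).intervalIntegrable _ _
  have hv' : IntervalIntegrable (fun x => Real.cos (m * x)) volume 0 (2 * π) :=
    (Real.continuous_cos.comp (continuous_const.mul continuous_id)).intervalIntegrable _ _
  have key := intervalIntegral.integral_mul_deriv_eq_deriv_mul hu hv hu' hv'
  unfold aHat bHat
  rw [key, sin_two_pi_nat m, show (m:ℝ) * 0 = 0 by ring, Real.sin_zero]
  have : (fun x => deriv g x * (Real.sin (m * x) / m))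
      = fun x => (deriv g x * Real.sin (m * x)) / m := by funext x; ring
  simp only [this, intervalIntegral.integral_div]
  ring

lemma ibp_sin (g : ℝ → ℝ) (hg : ContDiff ℝ 1 g) (hper : Function.Periodic g (2 * π))
    (m : ℕ) (hm : 1 ≤ m) :
    bHat g m = (1 / m) * aHat (deriv g) m := by
  have hm0 : (m : ℝ) ≠ 0 := Nat.cast_ne_zero.2 (by omega)
  have hu : ∀ x ∈ Set.uIcc (0:ℝ) (2 * π), HasDerivAt g (deriv g x) x := fun x _ =>
    (hg.differentiable one_ne_zero x).hasDerivAt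
  have hv : ∀ x ∈ Set.uIcc (0:ℝ) (2 * π),
      HasDerivAt (fun y => -(Real.cos (m * y) / m)) (Real.sin (m * x)) x :=
    fun x _ => hd_cosm m hm0 x
  have hu' : IntervalIntegrable (deriv g) volume 0 (2 * π) :=
    (hg.continuous_deriv le_rfl).intervalIntegrable _ _
  have hv' : IntervalIntegrable (fun x => Real.sin (m * x)) volume 0 (2 * π) :=
    (Real.continuous_sin.comp (continuous_const.mul continuous_id)).intervalIntegrable _ _
  have key := intervalIntegral.integral_mul_deriv_eq_deriv_mul hu hv hu' hv'
  have hg2 : g (2 * π) = g 0 := by simpa using hper 0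
  unfold aHat bHat
  rw [key, Real.cos_nat_mul_two_pi m, show (m:ℝ) * 0 = 0 by ring, Real.cos_zero, hg2]
  have : (fun x => deriv g x * -(Real.cos (m * x) / m))
      = fun x => -((deriv g x * Real.cos (m * x)) / m) := by funext x; ring
  simp only [this, intervalIntegral.integral_neg, intervalIntegral.integral_div]
  ring

lemma coeff_bound (g : ℝ → ℝ) (B : ℝ) (hB : ∀ x ∈ Set.Icc (0:ℝ) (2*π), |g x| ≤ B)
    (m : ℕ) : |aHat g m| ≤ 2 * B ∧ |bHat g m| ≤ 2 * B := by
  have hπ : (0:ℝ) < π := Real.pi_pos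
  have hsub : Set.uIoc (0:ℝ) (2*π) ⊆ Set.Icc (0:ℝ) (2*π) := by
    rw [Set.uIoc_of_le (by linarith)]
    exact Set.Ioc_subset_Icc_self
  constructor
  · unfold aHat
    rw [abs_mul, abs_of_pos (by positivity : (0:ℝ) < 1/π)]
    have h := intervalIntegral.norm_integral_le_of_norm_le_const
      (a := 0) (b := 2*π) (C := B) (f := fun x => g x * Real.cos (m * x)) ?_
    · rw [Real.norm_eq_abs] at h
      calc (1/π) * |∫ θ in (0:ℝ)..(2*π), g θ * Real.cos (m * θ)|
          ≤ (1/π) * (B * |2*π - 0|) := by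
            apply mul_le_mul_of_nonneg_left h (by positivity)
        _ = 2 * B := by rw [abs_of_pos (by linarith)]; field_simp; ring
    · intro x hx
      rw [Real.norm_eq_abs, abs_mul]
      have h1 := hB x (hsub hx)
      have h2 := Real.abs_cos_le_one (m * x)
      have h0 : (0:ℝ) ≤ B := le_trans (abs_nonneg _) (hB 0 (by constructor <;> [rfl; positivity]))
      nlinarith [abs_nonneg (g x)]
  · unfold bHat
    rw [abs_mul, abs_of_pos (by positivity : (0:ℝ) < 1/π)]
    have h := intervalIntegral.norm_integral_le_of_norm_le_const
      (a := 0) (b := 2*π) (C := B) (f := fun x => g x * Real.sin (m * x)) ?_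
    · rw [Real.norm_eq_abs] at h
      calc (1/π) * |∫ θ in (0:ℝ)..(2*π), g θ * Real.sin (m * θ)|
          ≤ (1/π) * (B * |2*π - 0|) := by
            apply mul_le_mul_of_nonneg_left h (by positivity)
        _ = 2 * B := by rw [abs_of_pos (by linarith)]; field_simp; ring
    · intro x hx
      rw [Real.norm_eq_abs, abs_mul]
      have h1 := hB x (hsub hx)
      have h2 := Real.abs_sin_le_one (m * x)
      have h0 : (0:ℝ) ≤ B := le_trans (abs_nonneg _) (hB 0 (by constructor <;> [rfl; positivity]))
      nlinarith [abs_nonneg (g x)]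

lemma periodic_deriv' {g : ℝ → ℝ} {c : ℝ} (h : Function.Periodic g c) :
    Function.Periodic (deriv g) c := by
  intro x
  have h1 : (fun y => g (y + c)) = g := funext h
  rw [← deriv_comp_add_const g c x, h1]

lemma decay (Ψ : ℝ → ℝ) (hΨ : ContDiff ℝ 4 Ψ) (hper : Function.Periodic Ψ (2 * π))
    (m : ℕ) (hm : 1 ≤ m) :
    aHat Ψ m = (1 / (m:ℝ)^4) * aHat (iteratedDeriv 4 Ψ) m ∧
    bHat Ψ m = (1 / (m:ℝ)^4) * bHat (iteratedDeriv 4 Ψ) m := by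
  have e4 : (4 : WithTop ℕ∞) = 3 + 1 := by norm_num
  have e3 : (3 : WithTop ℕ∞) = 2 + 1 := by norm_num
  have e2 : (2 : WithTop ℕ∞) = 1 + 1 := by norm_num
  have h1 : ContDiff ℝ 3 (deriv Ψ) := (contDiff_succ_iff_deriv.mp (e4 ▸ hΨ)).2.2
  have h2 : ContDiff ℝ 2 (deriv (deriv Ψ)) := (contDiff_succ_iff_deriv.mp (e3 ▸ h1)).2.2
  have h3 : ContDiff ℝ 1 (deriv (deriv (deriv Ψ))) := (contDiff_succ_iff_deriv.mp (e2 ▸ h2)).2.2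
  have p1 := periodic_deriv' hper
  have p2 := periodic_deriv' p1
  have p3 := periodic_deriv' p2
  have c0 : ContDiff ℝ 1 Ψ := hΨ.of_le (by norm_num)
  have c1 : ContDiff ℝ 1 (deriv Ψ) := h1.of_le (by norm_num)
  have c2 : ContDiff ℝ 1 (deriv (deriv Ψ)) := h2.of_le (by norm_num)
  have i4 : iteratedDeriv 4 Ψ = deriv (deriv (deriv (deriv Ψ))) := by
    rw [iteratedDeriv_succ, iteratedDeriv_succ, iteratedDeriv_succ, iteratedDeriv_succ,
      iteratedDeriv_zero]
  have ea := ibp_cos Ψ c0 m hm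
  have eb := ibp_sin (deriv Ψ) c1 p1 m hm
  have ec := ibp_cos (deriv (deriv Ψ)) c2 m hm
  have ed := ibp_sin (deriv (deriv (deriv Ψ))) h3 p3 m hm
  have eB := ibp_sin Ψ c0 hper m hm
  have eA := ibp_cos (deriv Ψ) c1 m hm
  have eD := ibp_sin (deriv (deriv Ψ)) c2 p2 m hm
  have eC := ibp_cos (deriv (deriv (deriv Ψ))) h3 m hm
  rw [i4]
  constructor
  · rw [ea, eb, ec, ed]; ring
  · rw [eB, eA, eD, eC]; ring


set_option maxHeartbeats 1000000 in
/-- the term `I` in the proof of the key lemma is `O(ε²)`. -/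
theorem termI_estimate
    (f Ψ : ℝ → ℝ) (M : ℝ) (hM : 1 ≤ M)
    (hfper : Function.Periodic f (2 * π)) (hfbd : ∀ θ : ℝ, |f θ| ≤ M)
    (hΨper : Function.Periodic Ψ (2 * π)) (hΨ : ContDiff ℝ 4 Ψ) :
    ∃ C₀ > (0:ℝ), ∀ ε : ℝ, 0 < ε → ε ≤ 1 / (2 * M) →
      ∀ θ ∈ Set.Icc (0:ℝ) (2 * π),
        |∑' n : ℕ, (1 - ((1 - ε * M) / (1 + ε * f θ)) ^ (n + 1)
              - ε * ((n : ℝ) + 1) * (M + f θ)) *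
            (aHat Ψ (n + 1) * Real.cos (((n : ℝ) + 1) * θ) +
             bHat Ψ (n + 1) * Real.sin (((n : ℝ) + 1) * θ))|
          ≤ C₀ * ε ^ 2 := by
  have hπ : (0:ℝ) < π := Real.pi_pos
  -- bound on the 4th derivative
  have hcont : ContinuousOn (iteratedDeriv 4 Ψ) (Set.Icc (0:ℝ) (2*π)) :=
    (hΨ.continuous_iteratedDeriv 4 le_rfl).continuousOn
  obtain ⟨B, hB⟩ := isCompact_Icc.exists_bound_of_continuousOn hcont
  simp only [Real.norm_eq_abs] at hB
  have hB0 : 0 ≤ B := le_trans (abs_nonneg _) (hB 0 ⟨le_rfl, by positivity⟩)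
  -- summability of 1/(n+1)^2
  have hS : Summable (fun n : ℕ => 1 / ((n:ℝ) + 1) ^ 2) := by
    have h := (summable_nat_add_iff (f := fun n : ℕ => 1 / (n:ℝ) ^ 2) 1).2
      (summable_one_div_nat_pow.2 one_lt_two)
    exact h.congr (fun n => by push_cast; ring_nf)
  set S : ℝ := ∑' n : ℕ, 1 / ((n:ℝ) + 1) ^ 2 with hSdef
  have hSpos : 0 < S := by
    apply Summable.tsum_pos hS (fun n => by positivity) 0
    norm_num
  set K : ℝ := 80 * M ^ 2 * (B + 1) with hK
  have hKpos : 0 < K := by positivity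
  refine ⟨K * S, by positivity, ?_⟩
  intro ε hε hεle θ hθ
  have hM0 : (0:ℝ) < M := by linarith
  have hεM : ε * M ≤ 1 / 2 := by
    have := mul_le_mul_of_nonneg_right hεle hM0.le
    calc ε * M ≤ 1 / (2 * M) * M := this
      _ = 1 / 2 := by field_simp
  have hF := hfbd θ
  -- per-term bound
  set T : ℕ → ℝ := fun n => (1 - ((1 - ε * M) / (1 + ε * f θ)) ^ (n + 1)
        - ε * ((n : ℝ) + 1) * (M + f θ)) *
      (aHat Ψ (n + 1) * Real.cos (((n : ℝ) + 1) * θ) +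
       bHat Ψ (n + 1) * Real.sin (((n : ℝ) + 1) * θ)) with hT
  have hb : ∀ n : ℕ, |T n| ≤ K * ε ^ 2 * (1 / ((n:ℝ) + 1) ^ 2) := by
    intro n
    have hm1 : 1 ≤ n + 1 := Nat.le_add_left 1 n
    have hNpos : (0:ℝ) < ((n:ℝ) + 1) := by positivity
    have hcast : ((n + 1 : ℕ) : ℝ) = (n:ℝ) + 1 := by push_cast; ring
    have hcoef : |1 - ((1 - ε * M) / (1 + ε * f θ)) ^ (n + 1)
          - ε * ((n : ℝ) + 1) * (M + f θ)|
        ≤ 20 * M ^ 2 * ((n:ℝ) + 1) ^ 2 * ε ^ 2 := by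
      have := coef_est M ε (f θ) hM hF hε hεM (n + 1) hm1
      rw [hcast] at this
      exact this
    obtain ⟨hda, hdb⟩ := decay Ψ hΨ hΨper (n + 1) hm1
    obtain ⟨hca, hcb⟩ := coeff_bound (iteratedDeriv 4 Ψ) B hB (n + 1)
    have haa : |aHat Ψ (n + 1)| ≤ 2 * B / ((n:ℝ) + 1) ^ 4 := by
      rw [hda, abs_mul, hcast, abs_of_pos (by positivity : (0:ℝ) < 1 / ((n:ℝ)+1)^4)]
      calc 1 / ((n:ℝ)+1)^4 * |aHat (iteratedDeriv 4 Ψ) (n+1)| ≤ 1 / ((n:ℝ)+1)^4 * (2*B) :=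
            mul_le_mul_of_nonneg_left hca (by positivity)
        _ = 2 * B / ((n:ℝ) + 1) ^ 4 := by ring
    have hbb : |bHat Ψ (n + 1)| ≤ 2 * B / ((n:ℝ) + 1) ^ 4 := by
      rw [hdb, abs_mul, hcast, abs_of_pos (by positivity : (0:ℝ) < 1 / ((n:ℝ)+1)^4)]
      calc 1 / ((n:ℝ)+1)^4 * |bHat (iteratedDeriv 4 Ψ) (n+1)| ≤ 1 / ((n:ℝ)+1)^4 * (2*B) :=
            mul_le_mul_of_nonneg_left hcb (by positivity)
        _ = 2 * B / ((n:ℝ) + 1) ^ 4 := by ring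
    have hsum : |aHat Ψ (n + 1) * Real.cos (((n : ℝ) + 1) * θ) +
        bHat Ψ (n + 1) * Real.sin (((n : ℝ) + 1) * θ)| ≤ 4 * B / ((n:ℝ) + 1) ^ 4 := by
      calc |aHat Ψ (n + 1) * Real.cos (((n : ℝ) + 1) * θ) +
            bHat Ψ (n + 1) * Real.sin (((n : ℝ) + 1) * θ)|
          ≤ |aHat Ψ (n + 1)| * |Real.cos (((n : ℝ) + 1) * θ)| +
            |bHat Ψ (n + 1)| * |Real.sin (((n : ℝ) + 1) * θ)| := by
            refine (abs_add_le _ _).trans ?_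
            rw [abs_mul, abs_mul]
        _ ≤ |aHat Ψ (n + 1)| * 1 + |bHat Ψ (n + 1)| * 1 := by
            gcongr
            · exact Real.abs_cos_le_one _
            · exact Real.abs_sin_le_one _
        _ = |aHat Ψ (n + 1)| + |bHat Ψ (n + 1)| := by ring
        _ ≤ 2 * B / ((n:ℝ) + 1) ^ 4 + 2 * B / ((n:ℝ) + 1) ^ 4 := add_le_add haa hbb
        _ = 4 * B / ((n:ℝ) + 1) ^ 4 := by ring
    rw [hT]
    rw [abs_mul]
    calc |1 - ((1 - ε * M) / (1 + ε * f θ)) ^ (n + 1) - ε * ((n : ℝ) + 1) * (M + f θ)| *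
          |aHat Ψ (n + 1) * Real.cos (((n : ℝ) + 1) * θ) +
           bHat Ψ (n + 1) * Real.sin (((n : ℝ) + 1) * θ)|
        ≤ (20 * M ^ 2 * ((n:ℝ) + 1) ^ 2 * ε ^ 2) * (4 * B / ((n:ℝ) + 1) ^ 4) := by
          exact mul_le_mul hcoef hsum (abs_nonneg _) (by positivity)
      _ = 80 * M ^ 2 * B * ε ^ 2 * (1 / ((n:ℝ) + 1) ^ 2) := by
          field_simp; ring
      _ ≤ K * ε ^ 2 * (1 / ((n:ℝ) + 1) ^ 2) := by
          rw [hK]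
          have : (0:ℝ) ≤ ε ^ 2 * (1 / ((n:ℝ) + 1) ^ 2) := by positivity
          nlinarith [this, sq_nonneg M]
  have hsb : Summable (fun n : ℕ => K * ε ^ 2 * (1 / ((n:ℝ) + 1) ^ 2)) := hS.mul_left _
  have hsT : Summable (fun n => |T n|) :=
    Summable.of_nonneg_of_le (fun n => abs_nonneg _) hb hsb
  have hsT' : Summable T := hsT.of_abs
  calc |∑' n, T n| ≤ ∑' n, |T n| := by
        have h := norm_tsum_le_tsum_norm (f := T)
          (by simpa only [Real.norm_eq_abs] using hsT)
        simpa only [Real.norm_eq_abs] using h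
    _ ≤ ∑' n : ℕ, K * ε ^ 2 * (1 / ((n:ℝ) + 1) ^ 2) := Summable.tsum_le_tsum hb hsT hsb
    _ = K * ε ^ 2 * S := by rw [tsum_mul_left]
    _ = K * S * ε ^ 2 := by ring
end

section
/- Let M ≥ 1, and let f : ℝ → ℝ be 2π-periodic with |f(θ)| ≤ M for all θ. Then there exists C > 0, depending only on M, such that for all ε ∈ (0, 1/(2M)] and all θ ∈ [0,2π]: Σ_{n=1}^∞ (1/n²) [ 1 − ((1−εM)/(1+εf(θ)))^n ]² ≤ C ε. -/
open Real MeasureTheory Set Filter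

lemma sq_summable : Summable (fun n : ℕ => (1:ℝ)/((n:ℝ)+1)^2) := by
  have h := (summable_one_div_nat_pow (p := 2)).2 (by norm_num)
  have := (summable_nat_add_iff (f := fun n : ℕ => (1:ℝ)/(n:ℝ)^2) 1).2 h
  refine this.congr fun n => ?_
  push_cast; ring_nf

lemma shifted_le (N n : ℕ) : (1:ℝ)/((n:ℝ)+N+1)^2 ≤ 1/((n:ℝ)+1)^2 := by
  have hN0 : (0:ℝ) ≤ N := by positivity
  apply one_div_le_one_div_of_le (by positivity)
  nlinarith [Nat.cast_nonneg (α := ℝ) n]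

lemma tail_bound (N : ℕ) (hN : 0 < N) :
    ∑' n : ℕ, (1:ℝ)/((n:ℝ)+(N:ℝ)+1)^2 ≤ 1/(N:ℝ) := by
  have hNpos : (0:ℝ) < N := by exact_mod_cast hN
  have hg : HasSum (fun n : ℕ => (1:ℝ)/((n:ℝ)+N) - 1/((n:ℝ)+N+1)) (1/(N:ℝ)) := by
    rw [hasSum_iff_tendsto_nat_of_nonneg]
    · have he : ∀ k : ℕ, ∑ i ∈ Finset.range k, ((1:ℝ)/((i:ℝ)+N) - 1/((i:ℝ)+N+1))
          = 1/(N:ℝ) - 1/((k:ℝ)+N) := by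
        intro k
        induction k with
        | zero => simp
        | succ k ih =>
          rw [Finset.sum_range_succ, ih]
          push_cast; ring
      simp only [he]
      have h2 : Tendsto (fun k : ℕ => 1/((k:ℝ)+N)) atTop (nhds 0) := by
        simp only [one_div]
        apply Tendsto.comp tendsto_inv_atTop_zero
        exact tendsto_atTop_add_const_right _ _ tendsto_natCast_atTop_atTop
      simpa using (tendsto_const_nhds.sub h2)
    · intro i
      have h1 : (0:ℝ) < (i:ℝ)+N := by positivity
      have hle : (1:ℝ)/((i:ℝ)+N+1) ≤ 1/((i:ℝ)+N) :=
        one_div_le_one_div_of_le h1 (by linarith)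
      linarith
  have hsum : Summable (fun n : ℕ => (1:ℝ)/((n:ℝ)+N+1)^2) :=
    sq_summable.of_nonneg_of_le (fun n => by positivity) (shifted_le N)
  refine le_of_le_of_eq (Summable.tsum_le_tsum (fun n => ?_) hsum hg.summable) hg.tsum_eq
  have h1 : (0:ℝ) < (n:ℝ)+N := by positivity
  have h2 : (0:ℝ) < (n:ℝ)+N+1 := by positivity
  have heq : (1:ℝ)/((n:ℝ)+N) - 1/((n:ℝ)+N+1) = 1/(((n:ℝ)+N)*((n:ℝ)+N+1)) := by
    field_simp
    ring
  rw [heq]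
  apply one_div_le_one_div_of_le (by positivity)
  nlinarith

lemma min_sum_bound (d : ℝ) (hd : 0 < d) :
    ∑' n : ℕ, min (d^2) ((1:ℝ)/((n:ℝ)+1)^2) ≤ 2*d + d^2 := by
  set N := ⌈1/d⌉₊ with hNdef
  have hN : 0 < N := Nat.ceil_pos.2 (by positivity)
  have hNpos : (0:ℝ) < N := by exact_mod_cast hN
  have hsum : Summable (fun n : ℕ => min (d^2) ((1:ℝ)/((n:ℝ)+1)^2)) :=
    sq_summable.of_nonneg_of_le (fun n => le_min (by positivity) (by positivity))
      (fun n => min_le_right _ _)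
  rw [← Summable.sum_add_tsum_nat_add N hsum]
  have hNle : (N:ℝ) ≤ 1/d + 1 := by
    have h := Nat.ceil_lt_add_one (a := 1/d) (by positivity)
    exact le_of_lt h
  have hhead : ∑ i ∈ Finset.range N, min (d^2) ((1:ℝ)/((i:ℝ)+1)^2) ≤ d + d^2 := by
    have h1 : ∑ i ∈ Finset.range N, min (d^2) ((1:ℝ)/((i:ℝ)+1)^2)
        ≤ ∑ i ∈ Finset.range N, d^2 := Finset.sum_le_sum fun i _ => min_le_left _ _
    have h2 : ∑ i ∈ Finset.range N, d^2 = (N:ℝ) * d^2 := by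
      rw [Finset.sum_const, Finset.card_range]; ring
    have h3 : (N:ℝ) * d^2 ≤ (1/d + 1) * d^2 := by nlinarith
    have h4 : (1/d + 1) * d^2 = d + d^2 := by field_simp
    linarith
  have htail : ∑' n : ℕ, min (d^2) ((1:ℝ)/(((n+N:ℕ):ℝ)+1)^2) ≤ d := by
    have h1 : ∑' n : ℕ, min (d^2) ((1:ℝ)/(((n+N:ℕ):ℝ)+1)^2)
        ≤ ∑' n : ℕ, (1:ℝ)/((n:ℝ)+N+1)^2 := by
      apply Summable.tsum_le_tsum
      · intro n
        have hc : (((n+N:ℕ):ℝ)+1) = ((n:ℝ)+N+1) := by push_cast; ring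
        rw [hc]
        exact min_le_right _ _
      · exact (hsum.comp_injective (add_left_injective N))
      · exact sq_summable.of_nonneg_of_le (fun n => by positivity) (shifted_le N)
    have h2 := tail_bound N hN
    have h3 : 1/(N:ℝ) ≤ d := by
      rw [div_le_iff₀ hNpos]
      have h4 : 1/d ≤ (N:ℝ) := Nat.le_ceil _
      rw [div_le_iff₀ hd] at h4
      linarith
    linarith
  linarith

/-- `Σ_{n≥1} n^{-2} [1 − ((1−εM)/(1+εf))^n]² ≤ C ε`,
with `C` depending only on `M`. -/
theorem key_sum_estimate (M : ℝ) (hM : 1 ≤ M) :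
    ∃ C > (0:ℝ), ∀ f : ℝ → ℝ,
      Function.Periodic f (2 * π) → (∀ θ : ℝ, |f θ| ≤ M) →
      ∀ ε : ℝ, 0 < ε → ε ≤ 1 / (2 * M) →
        ∀ θ ∈ Set.Icc (0:ℝ) (2 * π),
          ∑' n : ℕ, (1 / ((n : ℝ) + 1) ^ 2) *
              (1 - ((1 - ε * M) / (1 + ε * f θ)) ^ (n + 1)) ^ 2
            ≤ C * ε := by
  refine ⟨16 * M, by linarith, fun f _ hfb ε hε hεle θ _ => ?_⟩
  have hM0 : (0:ℝ) < M := by linarith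
  have hεM : ε * M ≤ 1/2 := by
    have h := (le_div_iff₀ (by positivity : (0:ℝ) < 2 * M)).1 hεle
    nlinarith
  set a := f θ with ha
  have haM : |a| ≤ M := hfb θ
  have ha1 : -M ≤ a := neg_le_of_abs_le haM
  have ha2 : a ≤ M := le_of_abs_le haM
  have hεa : ε * a ≥ -(ε * M) := by nlinarith
  have hden : (1:ℝ)/2 ≤ 1 + ε * a := by linarith
  have hdenpos : (0:ℝ) < 1 + ε * a := by linarith
  set q := (1 - ε * M) / (1 + ε * a) with hqdef
  have hqmul : q * (1 + ε * a) = 1 - ε * M := div_mul_cancel₀ _ (ne_of_gt hdenpos)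
  have hq0 : 0 ≤ q := div_nonneg (by linarith) (le_of_lt hdenpos)
  have hq1 : q ≤ 1 := by
    rw [hqdef, div_le_one hdenpos]
    linarith
  set d := 4 * M * ε with hddef
  have hd0 : 0 < d := by positivity
  have hd2 : d ≤ 2 := by nlinarith
  have hqd : 1 - q ≤ d := by nlinarith [hqmul, hden, hq1, hεa]
  -- termwise bound
  have hterm : ∀ n : ℕ, (1 / ((n : ℝ) + 1) ^ 2) * (1 - q ^ (n + 1)) ^ 2
      ≤ min (d^2) ((1:ℝ)/((n:ℝ)+1)^2) := by
    intro n
    have hn1 : (0:ℝ) < (n:ℝ) + 1 := by positivity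
    have hqp0 : 0 ≤ q ^ (n+1) := pow_nonneg hq0 _
    have hqp1 : q ^ (n+1) ≤ 1 := pow_le_one₀ hq0 hq1
    have hbern : 1 + ((n:ℕ)+1 : ℕ) * (q - 1) ≤ q ^ (n+1) := by
      have := one_add_mul_le_pow (a := q - 1) (by linarith) (n+1)
      simpa using this
    have hbern' : 1 - q ^ (n+1) ≤ ((n:ℝ)+1) * (1 - q) := by
      push_cast at hbern
      linarith
    have hub : 1 - q ^ (n+1) ≤ ((n:ℝ)+1) * d := by
      calc 1 - q ^ (n+1) ≤ ((n:ℝ)+1) * (1 - q) := hbern'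
        _ ≤ ((n:ℝ)+1) * d := mul_le_mul_of_nonneg_left hqd (le_of_lt hn1)
    refine le_min ?_ ?_
    · rw [div_mul_eq_mul_div, div_le_iff₀ (by positivity)]
      have h1 : (1 - q ^ (n+1)) ^ 2 ≤ (((n:ℝ)+1) * d) ^ 2 :=
        pow_le_pow_left₀ (by linarith) hub 2
      calc 1 * (1 - q ^ (n+1)) ^ 2 = (1 - q ^ (n+1)) ^ 2 := one_mul _
        _ ≤ (((n:ℝ)+1) * d) ^ 2 := h1
        _ = d ^ 2 * ((n:ℝ)+1) ^ 2 := by ring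
    · rw [div_mul_eq_mul_div, div_le_div_iff₀ (by positivity) (by positivity)]
      have hsq : (1 - q ^ (n+1)) ^ 2 ≤ 1 := by
        have h0 : 0 ≤ 1 - q ^ (n+1) := by linarith
        have h1 : 1 - q ^ (n+1) ≤ 1 := by linarith
        calc (1 - q ^ (n+1)) ^ 2 ≤ 1 ^ 2 := pow_le_pow_left₀ h0 h1 2
          _ = 1 := one_pow 2
      have h2 := mul_le_mul_of_nonneg_right hsq (sq_nonneg ((n:ℝ)+1))
      linarith
  have hsummin : Summable (fun n : ℕ => min (d^2) ((1:ℝ)/((n:ℝ)+1)^2)) :=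
    sq_summable.of_nonneg_of_le (fun n => le_min (by positivity) (by positivity))
      (fun n => min_le_right _ _)
  have hsumL : Summable (fun n : ℕ => (1 / ((n : ℝ) + 1) ^ 2) * (1 - q ^ (n + 1)) ^ 2) := by
    apply sq_summable.of_nonneg_of_le (fun n => by positivity)
    intro n
    exact le_trans (hterm n) (min_le_right _ _)
  calc ∑' n : ℕ, (1 / ((n : ℝ) + 1) ^ 2) * (1 - q ^ (n + 1)) ^ 2
      ≤ ∑' n : ℕ, min (d^2) ((1:ℝ)/((n:ℝ)+1)^2) := Summable.tsum_le_tsum hterm hsumL hsummin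
    _ ≤ 2*d + d^2 := min_sum_bound d hd0
    _ ≤ 4*d := by nlinarith [hd0, hd2]
    _ = 16 * M * ε := by rw [hddef]; ring
end
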